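/- For c ≥ 1 and real a, the minimum over the listed values min(a/c, -a/c, 0, (a²+c²)/c, 1/c, (5c-3(a²+c²)+√D)/(2c), (5c-3(a²+c²)-√D)/(2c), 4-3(a²+c²)/c, 1) equals min(-|a|/c, (5c-3(a²+c²)-√D)/(2c)), where D = 16a² + 9c² - 18c(a²+c²) + 9(a²+c²)². -/
import Mathlib


theorem stmt_13 (a c : ℝ) (hc : 1 ≤ c)
    (D : ℝ) (hD : D = 16*a^2 + 9*c^2 - 18*c*(a^2+c^2) + 9*(a^2+c^2)^2) :
    min (a/c) (min (-a/c) (min 0 (min ((a^2+c^2)/c) (min (1/c)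
      (min ((5*c - 3*(a^2+c^2) + Real.sqrt D)/(2*c))
        (min ((5*c - 3*(a^2+c^2) - Real.sqrt D)/(2*c))
          (min (4 - 3*(a^2+c^2)/c) 1)))))))
    = min (-|a|/c) ((5*c - 3*(a^2+c^2) - Real.sqrt D)/(2*c)) := by
  have hc0 : (0:ℝ) < c := lt_of_lt_of_le one_pos hc
  have h2c : (0:ℝ) < 2*c := by linarith
  have hsq : 0 ≤ Real.sqrt D := Real.sqrt_nonneg D
  have habs : |3*(a^2+c^2) - 3*c| ≤ Real.sqrt D := by
    rw [← Real.sqrt_sq_eq_abs]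
    apply Real.sqrt_le_sqrt
    nlinarith [sq_nonneg a]
  have h1 : 3*(a^2+c^2) - 3*c ≤ Real.sqrt D := le_trans (le_abs_self _) habs
  have h1' : 3*c - 3*(a^2+c^2) ≤ Real.sqrt D := by
    have h : 3*c - 3*(a^2+c^2) ≤ |3*(a^2+c^2) - 3*c| := by
      rw [abs_sub_comm]; exact le_abs_self _
    linarith
  have hm2le1 : (5*c - 3*(a^2+c^2) - Real.sqrt D)/(2*c) ≤ 1 := by
    rw [div_le_one h2c]; linarith
  have hm2lep : (5*c - 3*(a^2+c^2) - Real.sqrt D)/(2*c)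
      ≤ (5*c - 3*(a^2+c^2) + Real.sqrt D)/(2*c) := by
    rw [div_le_div_iff₀ h2c h2c]; nlinarith
  have h4 : 4 - 3*(a^2+c^2)/c = (8*c - 6*(a^2+c^2))/(2*c) := by
    field_simp; ring
  have hm2le4 : (5*c - 3*(a^2+c^2) - Real.sqrt D)/(2*c) ≤ 4 - 3*(a^2+c^2)/c := by
    rw [h4, div_le_div_iff₀ h2c h2c]; nlinarith
  have hneg : -|a|/c ≤ 0 :=
    div_nonpos_of_nonpos_of_nonneg (neg_nonpos.mpr (abs_nonneg a)) hc0.le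
  apply le_antisymm
  · apply le_min
    · rcases le_or_gt 0 a with h | h
      · rw [abs_of_nonneg h]
        exact le_trans (min_le_right _ _) (min_le_left _ _)
      · rw [abs_of_neg h, neg_neg]
        exact min_le_left _ _
    · exact le_trans (min_le_right _ _) (le_trans (min_le_right _ _)
        (le_trans (min_le_right _ _) (le_trans (min_le_right _ _)
        (le_trans (min_le_right _ _) (le_trans (min_le_right _ _)
        (min_le_left _ _))))))
  · refine le_min ?_ (le_min ?_ (le_min ?_ (le_min ?_ (le_min ?_
      (le_min ?_ (le_min ?_ (le_min ?_ ?_)))))))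
    · refine le_trans (min_le_left _ _) ?_
      rw [div_le_div_iff₀ hc0 hc0]
      nlinarith [neg_abs_le a]
    · refine le_trans (min_le_left _ _) ?_
      rw [div_le_div_iff₀ hc0 hc0]
      nlinarith [le_abs_self a]
    · exact le_trans (min_le_left _ _) hneg
    · refine le_trans (min_le_left _ _) (le_trans hneg ?_)
      positivity
    · refine le_trans (min_le_left _ _) (le_trans hneg ?_)
      positivity
    · exact le_trans (min_le_right _ _) hm2lep
    · exact min_le_right _ _
    · exact le_trans (min_le_right _ _) hm2le4
    · exact le_trans (min_le_right _ _) hm2le1
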